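/- Let N = 2^n̄ with n̄ ≥ 1, let φ_k(t) = N^{-1/2} e^{2πi kt/N} be the discrete Fourier basis element for an integer frequency k with -N/2+1 ≤ k ≤ N/2, k ≠ 0, and let h_{n,l} be a 1D discrete Haar wavelet of resolution n and position l. Then |⟨φ_k, h_{n,l}⟩| ≤ √2 / √|k|. -/

import Mathlib

noncomputable section

/-- The 1D Haar scaling function `ψ(t) = 2^{-n̄/2}` on `{0,…,2^n̄-1}`. -/
def haarScaling (nb : ℕ) : ℕ → ℝ := fun _ => (2 : ℝ) ^ (-(nb : ℝ) / 2)

/-- The 1D discrete Haar wavelet `h_{n,l}` at resolution `n` and position `l`,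
on the grid `{0,…,2^n̄-1}`. -/
def haarWavelet (nb n l : ℕ) : ℕ → ℝ := fun t =>
  if l * 2 ^ (nb - n) ≤ t ∧ 2 * t < (2 * l + 1) * 2 ^ (nb - n) then
    (2 : ℝ) ^ (((n : ℝ) - nb) / 2)
  else if (2 * l + 1) * 2 ^ (nb - n) ≤ 2 * t ∧ t < (l + 1) * 2 ^ (nb - n) then
    -((2 : ℝ) ^ (((n : ℝ) - nb) / 2))
  else 0

/-- Index set of the 1D Haar wavelet basis of `ℂ^{2^n̄}`: the scaling function
together with the wavelets `h_{n,l}`, `0 ≤ n ≤ n̄-1`, `0 ≤ l ≤ 2^n - 1`. -/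
abbrev HaarIndex (nb : ℕ) := Unit ⊕ (Σ n : Fin nb, Fin (2 ^ (n : ℕ)))

/-- The 1D Haar wavelet basis functions, indexed by `HaarIndex`. -/
def haarFn (nb : ℕ) : HaarIndex nb → ℕ → ℝ
  | Sum.inl _ => haarScaling nb
  | Sum.inr ⟨n, l⟩ => haarWavelet nb n l

end

noncomputable section

/-- The 1D discrete Fourier basis element `φ_k(t) = N^{-1/2} e^{2πi k t / N}`
with `N = 2^n̄`. -/
def fourierFn (nb : ℕ) (k : ℤ) (t : ℕ) : ℂ :=
  (Real.sqrt (2 ^ nb) : ℂ)⁻¹ *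
    Complex.exp (2 * Real.pi * Complex.I * k * t / (2 ^ nb))

end

open Finset

lemma abs_exp_I_sub_one (x : ℝ) :
    ‖Complex.exp (x * Complex.I) - 1‖ = 2 * |Real.sin (x / 2)| := by
  rw [Complex.exp_mul_I]
  have h1 : Complex.cos x + Complex.sin x * Complex.I - 1
      = Complex.ofReal (Real.cos x - 1) + Complex.ofReal (Real.sin x) * Complex.I := by
    push_cast; ring
  rw [h1, Complex.norm_add_mul_I, Real.abs_sin_half]
  have h2 : (Real.cos x - 1) ^ 2 + Real.sin x ^ 2 = 2 ^ 2 * ((1 - Real.cos x) / 2) := by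
    have := Real.sin_sq_add_cos_sq x; nlinarith
  rw [h2, Real.sqrt_mul (by norm_num), Real.sqrt_sq (by norm_num)]


lemma key_bound (P x Hr s σ : ℝ) (hP : 1 ≤ P) (hx : 1 ≤ x) (hHr : 0 < Hr)
    (hs : P / (x * Hr) ≤ s) (hσ0 : 0 ≤ σ) (hσ1 : σ ≤ 1)
    (hσ2 : σ ≤ Real.pi * P / (2 * x)) :
    2 * σ ^ 2 / ((Real.sqrt (2 * x * Hr) * Real.sqrt (2 * Hr)) * s) ≤
      Real.sqrt 2 / Real.sqrt P := by
  have hP0 : (0:ℝ) < P := by linarith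
  have hx0 : (0:ℝ) < x := by linarith
  have hs0 : (0:ℝ) < s := lt_of_lt_of_le (by positivity) hs
  have hD : Real.sqrt (2 * x * Hr) * Real.sqrt (2 * Hr) = 2 * Hr * Real.sqrt x := by
    rw [← Real.sqrt_mul (by positivity)]
    rw [show 2 * x * Hr * (2 * Hr) = (2 * Hr) ^ 2 * x by ring]
    rw [Real.sqrt_mul (sq_nonneg _), Real.sqrt_sq (by positivity)]
  have hxx : Real.sqrt x * Real.sqrt x = x := Real.mul_self_sqrt (by positivity)
  have hsx0 : (0:ℝ) < Real.sqrt x := Real.sqrt_pos.mpr hx0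
  have step1 : 2 * σ ^ 2 / ((Real.sqrt (2 * x * Hr) * Real.sqrt (2 * Hr)) * s) ≤
      σ ^ 2 * Real.sqrt x / P := by
    rw [hD, div_le_div_iff₀ (by positivity) hP0]
    have hsP : P ≤ s * (x * Hr) := (div_le_iff₀ (by positivity)).mp hs
    have e : σ ^ 2 * Real.sqrt x * (2 * Hr * Real.sqrt x * s)
        = 2 * σ ^ 2 * (s * ((Real.sqrt x * Real.sqrt x) * Hr)) := by ring
    rw [hxx] at e
    have h' : 2 * σ ^ 2 * P ≤ 2 * σ ^ 2 * (s * (x * Hr)) :=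
      mul_le_mul_of_nonneg_left hsP (by positivity)
    rw [e]; linarith
  refine step1.trans ?_
  have h1 : (0:ℝ) ≤ σ ^ 2 * Real.sqrt x / P := by positivity
  have h2 : (0:ℝ) ≤ Real.sqrt 2 / Real.sqrt P := by positivity
  rw [← pow_le_pow_iff_left₀ h1 h2 (two_ne_zero)]
  have e1 : (σ ^ 2 * Real.sqrt x / P) ^ 2 = σ ^ 4 * x / P ^ 2 := by
    rw [div_pow, mul_pow, Real.sq_sqrt (by positivity)]; ring
  have e2 : (Real.sqrt 2 / Real.sqrt P) ^ 2 = 2 / P := by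
    rw [div_pow, Real.sq_sqrt (by norm_num), Real.sq_sqrt (by positivity)]
  rw [e1, e2, div_le_div_iff₀ (by positivity) hP0]
  rcases le_total x (2 * P) with hc | hc
  · have hσ4 : σ ^ 4 ≤ 1 := pow_le_one₀ hσ0 hσ1
    nlinarith [mul_le_mul_of_nonneg_right hσ4 (show (0:ℝ) ≤ x * P by positivity),
      mul_le_mul_of_nonneg_right hc (show (0:ℝ) ≤ P by positivity)]
  · have hσx : σ * (2 * x) ≤ Real.pi * P :=
      (le_div_iff₀ (by positivity : (0:ℝ) < 2 * x)).mp hσ2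
    have h4 : (σ * (2 * x)) ^ 4 ≤ (Real.pi * P) ^ 4 := by
      apply pow_le_pow_left₀ (by positivity) hσx
    have hπ : Real.pi ≤ 4 := Real.pi_le_four
    have hπ0 : (0:ℝ) < Real.pi := Real.pi_pos
    have hsqpi : Real.pi ^ 2 ≤ 16 := by nlinarith
    have hp4 : Real.pi ^ 4 ≤ 256 := by nlinarith [sq_nonneg (Real.pi ^ 2), hsqpi]
    have h8 : 8 * P ^ 3 ≤ x ^ 3 := by
      have := pow_le_pow_left₀ (by positivity : (0:ℝ) ≤ 2 * P) hc 3
      nlinarith [this]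
    have key : σ ^ 4 * x * P * (16 * x ^ 4) ≤ 2 * P ^ 2 * (16 * x ^ 4) := by
      calc σ ^ 4 * x * P * (16 * x ^ 4) = (σ * (2 * x)) ^ 4 * (x * P) := by ring
        _ ≤ (Real.pi * P) ^ 4 * (x * P) := by
            exact mul_le_mul_of_nonneg_right h4 (by positivity)
        _ = Real.pi ^ 4 * (P ^ 4 * x * P) := by ring
        _ ≤ 256 * (P ^ 4 * x * P) := mul_le_mul_of_nonneg_right hp4 (by positivity)
        _ = 32 * (8 * P ^ 3) * (P ^ 2 * x) := by ring
        _ ≤ 32 * x ^ 3 * (P ^ 2 * x) := by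
            apply mul_le_mul_of_nonneg_right _ (by positivity)
            linarith
        _ = 2 * P ^ 2 * (16 * x ^ 4) := by ring
    exact le_of_mul_le_mul_right key (by positivity)



/-- Fourier–Haar inner product bound `|⟨φ_k, h_{n,l}⟩| ≤ √2/√|k|`. -/
theorem fourier_haar_inner_bound (nb : ℕ) (hnb : 1 ≤ nb) (k : ℤ) (hk : k ≠ 0)
    (hklb : -((2 : ℤ) ^ nb) / 2 + 1 ≤ k) (hkub : k ≤ (2 : ℤ) ^ nb / 2)
    (n l : ℕ) (hn : n ≤ nb - 1) (hl : l ≤ 2 ^ n - 1) :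
    ‖(∑ t ∈ Finset.range (2 ^ nb),
        (starRingEnd ℂ) (fourierFn nb k t) * (haarWavelet nb n l t : ℂ))‖ ≤
      Real.sqrt 2 / Real.sqrt |(k : ℝ)| := by
  have hnlt : n < nb := by omega
  set N : ℕ := 2 ^ nb with hN
  set H : ℕ := 2 ^ (nb - n - 1) with hH
  have hM2 : 2 ^ (nb - n) = 2 * H := by
    rw [hH, ← pow_succ']
    congr 1
    omega
  set a : ℕ := l * (2 * H) with ha
  -- support inside range N
  have hsub : a + 2 * H ≤ N := by
    have h1 : (l + 1) * (2 * H) ≤ 2 ^ n * (2 * H) := by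
      have : l + 1 ≤ 2 ^ n := by
        have := Nat.one_le_two_pow (n := n); omega
      exact Nat.mul_le_mul_right _ this
    have h2 : (2:ℕ) ^ n * (2 * H) = N := by
      rw [hN, hH, ← hM2, ← pow_add]
      congr 1
      omega
    calc a + 2 * H = (l + 1) * (2 * H) := by ring
    _ ≤ 2 ^ n * (2 * H) := h1
    _ = N := h2
  set θ : ℝ := -(2 * Real.pi * k / N) with hθ
  set z : ℂ := Complex.exp (θ * Complex.I) with hz
  set c : ℝ := (2 : ℝ) ^ (((n : ℝ) - nb) / 2) with hc
  set C : ℝ := (Real.sqrt (2 ^ nb))⁻¹ with hC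
  -- conj fourier
  have hconj : ∀ t : ℕ, (starRingEnd ℂ) (fourierFn nb k t) = (C : ℂ) * z ^ t := by
    intro t
    rw [fourierFn, map_mul, ← Complex.exp_nat_mul, ← Complex.exp_conj]
    congr 1
    · simp [hC, Complex.ofReal_inv, Complex.conj_ofReal]
    · rw [map_div₀]
      simp only [map_mul, Complex.conj_I, Complex.conj_ofReal, map_intCast, map_natCast,
        map_pow, map_ofNat, Complex.conj_ofReal]
      rw [hθ]
      push_cast [hN]
      field_simp
  -- haar wavelet values
  have hval : ∀ t : ℕ, (haarWavelet nb n l t : ℝ) =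
      if a ≤ t ∧ t < a + H then c else if a + H ≤ t ∧ t < a + 2 * H then -c else 0 := by
    intro t
    rw [haarWavelet, hM2]
    have key1 : (2 * l + 1) * (2 * H) = 2 * (a + H) := by rw [ha]; ring
    have key2 : (l + 1) * (2 * H) = a + 2 * H := by rw [ha]; ring
    have e1 : (l * (2 * H) ≤ t ∧ 2 * t < (2 * l + 1) * (2 * H)) ↔ (a ≤ t ∧ t < a + H) := by
      rw [ha, key1]; omega
    have e2 : ((2 * l + 1) * (2 * H) ≤ 2 * t ∧ t < (l + 1) * (2 * H)) ↔
        (a + H ≤ t ∧ t < a + 2 * H) := by rw [key1, key2]; omega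
    simp only [e1, e2, hc]
  -- sin quantities
  set s : ℝ := |Real.sin (θ / 2)| with hs_def
  set σ : ℝ := |Real.sin ((H : ℝ) * θ / 2)| with hσ_def
  set P : ℝ := |(k : ℝ)| with hP_def
  have hP1 : (1:ℝ) ≤ P := by
    rw [hP_def]
    have h1 : (1:ℤ) ≤ |k| := Int.one_le_abs hk
    calc (1:ℝ) = ((1:ℤ):ℝ) := by norm_num
      _ ≤ ((|k|:ℤ):ℝ) := by exact_mod_cast h1
      _ = |(k:ℝ)| := by push_cast; ring
  have hkN : 2 * |k| ≤ (2:ℤ) ^ nb := by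
    have h2 : (2:ℤ) ^ nb = 2 * 2 ^ (nb - 1) := by
      rw [← pow_succ']; congr 1; omega
    have hdiv : (2:ℤ) ^ nb / 2 = 2 ^ (nb - 1) := by
      rw [h2]; exact Int.mul_ediv_cancel_left _ two_ne_zero
    have hdiv' : -(2:ℤ) ^ nb / 2 = -(2 ^ (nb - 1)) := by
      rw [show -(2:ℤ) ^ nb = 2 * (-(2 ^ (nb - 1))) by rw [h2]; ring]
      exact Int.mul_ediv_cancel_left _ two_ne_zero
    rw [hdiv] at hkub
    rw [hdiv'] at hklb
    rw [h2]
    rcases abs_cases k with ⟨he, _⟩ | ⟨he, _⟩ <;> rw [he] <;> linarith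
  have hPN : 2 * P ≤ (N:ℝ) := by
    rw [hP_def]
    calc 2 * |(k:ℝ)| = ((2 * |k| : ℤ) : ℝ) := by push_cast; ring
      _ ≤ (((2:ℤ) ^ nb : ℤ) : ℝ) := by exact_mod_cast hkN
      _ = (N : ℝ) := by rw [hN]; push_cast; ring
  have hHpos : 0 < H := by rw [hH]; exact Nat.two_pow_pos _
  have hHr : (0:ℝ) < (H:ℝ) := by exact_mod_cast hHpos
  have hx : (1:ℝ) ≤ (2:ℝ) ^ n := one_le_pow₀ (by norm_num)
  have hx0 : (0:ℝ) < (2:ℝ) ^ n := by positivity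
  have hNr : (N:ℝ) = 2 * (2:ℝ) ^ n * (H:ℝ) := by
    rw [hN, hH]
    push_cast
    have e : (2:ℝ) * 2 ^ n * 2 ^ (nb - n - 1) = 2 ^ (1 + n + (nb - n - 1)) := by
      rw [pow_add, pow_add, pow_one]
    rw [e]
    congr 1
    omega
  have hN0 : (0:ℝ) < (N:ℝ) := by rw [hNr]; positivity
  have hθ2 : θ / 2 = -(Real.pi * (k:ℝ) / (N:ℝ)) := by rw [hθ]; ring
  have hθabs : |θ / 2| = Real.pi * P / (N:ℝ) := by
    rw [hθ2, abs_neg, abs_div, abs_mul, _root_.abs_of_nonneg Real.pi_pos.le,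
      _root_.abs_of_nonneg hN0.le, hP_def]
  have hP0 : (0:ℝ) < P := by linarith
  have hs_lb : P / ((2:ℝ) ^ n * (H:ℝ)) ≤ s := by
    have h1 : |θ / 2| ≤ Real.pi / 2 := by
      rw [hθabs, div_le_div_iff₀ hN0 (by norm_num)]
      nlinarith [Real.pi_pos]
    have h2 := Real.mul_abs_le_abs_sin h1
    rw [hθabs] at h2
    have h3 : 2 / Real.pi * (Real.pi * P / (N:ℝ)) = P / ((2:ℝ) ^ n * (H:ℝ)) := by
      rw [hNr]
      field_simp
    rw [h3] at h2
    exact h2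
  have hs0 : (0:ℝ) < s :=
    lt_of_lt_of_le (by positivity) hs_lb
  have hσ0 : (0:ℝ) ≤ σ := abs_nonneg _
  have hσ1 : σ ≤ 1 := abs_le.mpr ⟨Real.neg_one_le_sin _, Real.sin_le_one _⟩
  have hσ2 : σ ≤ Real.pi * P / (2 * (2:ℝ) ^ n) := by
    have h1 : σ ≤ |(H:ℝ) * θ / 2| := Real.abs_sin_le_abs
    have h2 : |(H:ℝ) * θ / 2| = (H:ℝ) * (Real.pi * P / (N:ℝ)) := by
      rw [show (H:ℝ) * θ / 2 = (H:ℝ) * (θ / 2) by ring, abs_mul,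
        _root_.abs_of_nonneg hHr.le, hθabs]
    have h3 : (H:ℝ) * (Real.pi * P / (N:ℝ)) = Real.pi * P / (2 * (2:ℝ) ^ n) := by
      rw [hNr]
      field_simp
    rw [h2, h3] at h1
    exact h1
  -- complex abs facts
  have hzabs : ‖z - 1‖ = 2 * s := by
    rw [hz]; exact abs_exp_I_sub_one θ
  have hz1 : z ≠ 1 := by
    intro hzz
    rw [hzz, sub_self, norm_zero] at hzabs
    linarith
  have hzH : z ^ H = Complex.exp ((((H:ℝ) * θ : ℝ) : ℂ) * Complex.I) := by
    rw [hz, ← Complex.exp_nat_mul]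
    congr 1
    push_cast
    ring
  have hzHabs : ‖z ^ H - 1‖ = 2 * σ := by
    rw [hzH]; exact abs_exp_I_sub_one _
  -- sum computation
  have hvanish : ∀ t ∈ Finset.range N, t ∉ Finset.Ico a (a + 2 * H) →
      (starRingEnd ℂ) (fourierFn nb k t) * (haarWavelet nb n l t : ℂ) = 0 := by
    intro t _ ht
    rw [Finset.mem_Ico, not_and_or, not_le, not_lt] at ht
    have h0 : haarWavelet nb n l t = 0 := by
      rw [hval t, if_neg (by omega), if_neg (by omega)]
    rw [h0]
    simp
  have hsub' : Finset.Ico a (a + 2 * H) ⊆ Finset.range N := by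
    intro t ht
    rw [Finset.mem_Ico] at ht
    rw [Finset.mem_range]
    omega
  set G : ℂ := ∑ j ∈ Finset.range H, z ^ j with hG
  have hgeo : ∀ b : ℕ, ∑ t ∈ Finset.Ico b (b + H), z ^ t = z ^ b * G := by
    intro b
    rw [Finset.sum_Ico_eq_sum_range, hG, Finset.mul_sum]
    simp only [Nat.add_sub_cancel_left]
    exact Finset.sum_congr rfl fun j _ => pow_add z b j
  have hsum : (∑ t ∈ Finset.range N,
        (starRingEnd ℂ) (fourierFn nb k t) * (haarWavelet nb n l t : ℂ))
      = (C : ℂ) * (c : ℂ) * (z ^ a * ((1 - z ^ H) * ((z ^ H - 1) / (z - 1)))) := by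
    rw [← Finset.sum_subset hsub' hvanish]
    rw [← Finset.sum_Ico_consecutive _ (Nat.le_add_right a H)
      (show a + H ≤ a + 2 * H by omega)]
    have e1 : ∑ t ∈ Finset.Ico a (a + H),
        (starRingEnd ℂ) (fourierFn nb k t) * (haarWavelet nb n l t : ℂ)
        = (C : ℂ) * (c : ℂ) * (z ^ a * G) := by
      rw [← hgeo a, Finset.mul_sum]
      apply Finset.sum_congr rfl
      intro t ht
      rw [Finset.mem_Ico] at ht
      rw [hconj t, hval t, if_pos (by omega)]
      push_cast
      ring
    have e2 : ∑ t ∈ Finset.Ico (a + H) (a + 2 * H),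
        (starRingEnd ℂ) (fourierFn nb k t) * (haarWavelet nb n l t : ℂ)
        = -((C : ℂ) * (c : ℂ) * (z ^ (a + H) * G)) := by
      have hsplit : a + 2 * H = (a + H) + H := by omega
      rw [hsplit, ← hgeo (a + H), Finset.mul_sum, ← Finset.sum_neg_distrib]
      apply Finset.sum_congr rfl
      intro t ht
      rw [Finset.mem_Ico] at ht
      rw [hconj t, hval t, if_neg (by omega), if_pos (by omega)]
      push_cast
      ring
    rw [e1, e2]
    have hGval : G = (z ^ H - 1) / (z - 1) := by
      rw [hG]; exact geom_sum_eq hz1 H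
    rw [hGval, pow_add]
    ring
  have hC0 : (0:ℝ) ≤ C := by rw [hC]; positivity
  have hc0 : (0:ℝ) ≤ c := by rw [hc]; positivity
  have habs : ‖∑ t ∈ Finset.range N,
        (starRingEnd ℂ) (fourierFn nb k t) * (haarWavelet nb n l t : ℂ)‖
      = C * c * ((2 * σ) * (2 * σ)) / (2 * s) := by
    rw [hsum, norm_mul, norm_mul, norm_mul, norm_mul, norm_div]
    rw [Complex.norm_real, Complex.norm_real, Real.norm_eq_abs, Real.norm_eq_abs]
    rw [norm_pow, hz, Complex.norm_exp_ofReal_mul_I, one_pow]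
    rw [show ‖1 - z ^ H‖ = ‖z ^ H - 1‖ from
      norm_sub_rev 1 (z ^ H)]
    rw [hzHabs, hzabs, _root_.abs_of_nonneg hC0, _root_.abs_of_nonneg hc0]
    ring
  -- rewrite constants
  have h2nn : (2:ℝ) ^ (nb - n) = 2 * (H:ℝ) := by exact_mod_cast hM2
  have hc' : c = (Real.sqrt ((2:ℝ) ^ (nb - n)))⁻¹ := by
    rw [hc]
    have h1 : Real.sqrt ((2:ℝ) ^ (nb - n)) = (2:ℝ) ^ ((((nb - n : ℕ)):ℝ) / 2) := by
      rw [Real.sqrt_eq_rpow, ← Real.rpow_natCast 2 (nb - n),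
        ← Real.rpow_mul (by norm_num), mul_one_div]
    rw [h1, ← Real.rpow_neg (by norm_num : (0:ℝ) ≤ 2)]
    congr 1
    rw [Nat.cast_sub hnlt.le]
    ring
  have h2nb : (2:ℝ) ^ nb = 2 * (2:ℝ) ^ n * (H:ℝ) := by
    rw [← hNr, hN]; push_cast; ring
  have hfin : C * c * ((2 * σ) * (2 * σ)) / (2 * s)
      = 2 * σ ^ 2 / ((Real.sqrt (2 * (2:ℝ) ^ n * (H:ℝ)) * Real.sqrt (2 * (H:ℝ))) * s) := by
    rw [hC, hc', h2nb, h2nn]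
    have hA : (0:ℝ) < Real.sqrt (2 * (2:ℝ) ^ n * (H:ℝ)) := Real.sqrt_pos.mpr (by positivity)
    have hB : (0:ℝ) < Real.sqrt (2 * (H:ℝ)) := Real.sqrt_pos.mpr (by positivity)
    field_simp
  rw [habs, hfin]
  exact key_bound P ((2:ℝ) ^ n) (H:ℝ) s σ hP1 hx hHr hs_lb hσ0 hσ1 hσ2
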